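/- For the one-dimensional Laplace mechanism Q with scale η, the total variation distance between Q(u1) and Q(u2) satisfies TV(Q(u1), Q(u2)) = 1 − e^{−|u1−u2|/(2η)}. -/

import Mathlib

set_option maxHeartbeats 1000000

open MeasureTheory ENNReal Real Set Filter

namespace LapTVAux

noncomputable def lap (η u y : ℝ) : ℝ := Real.exp (-|u - y| / η) / (2 * η)

lemma lap_nonneg (η u y : ℝ) (hη : 0 < η) : 0 ≤ lap η u y :=
  div_nonneg (Real.exp_nonneg _) (by positivity)

lemma lap_continuous (η u : ℝ) : Continuous (lap η u) := by
  unfold lap; fun_prop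

lemma integrableOn_exp_Iic (η u a : ℝ) (hη : 0 < η) :
    IntegrableOn (fun y : ℝ => Real.exp ((y - u) / η)) (Iic a) := by
  have h1 : IntegrableOn (fun x : ℝ => Real.exp (-(1/η) * x) * Real.exp (-u/η)) (Ioi (-a)) :=
    (exp_neg_integrableOn_Ioi (-a) (by positivity)).mul_const _
  have h2 : IntegrableOn (fun x : ℝ => Real.exp ((-x - u) / η)) (Ioi (-a)) := by
    refine h1.congr_fun (fun x _ => ?_) measurableSet_Ioi
    beta_reduce
    rw [← Real.exp_add]
    exact Real.exp_eq_exp.mpr (by field_simp; ring)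
  have h3 : IntegrableOn (fun x : ℝ => Real.exp ((-x - u) / η)) (Ici (-a)) :=
    Iff.mpr integrableOn_Ici_iff_integrableOn_Ioi h2
  have A : MeasurableEmbedding (fun x : ℝ => -x) :=
    (Homeomorph.neg ℝ).isClosedEmbedding.measurableEmbedding
  have hpre : Ici (-a) = (fun x : ℝ => -x) ⁻¹' (Iic a) := by
    ext x; simp [neg_le]
  have hmap : (volume : Measure ℝ).restrict (Iic a)
      = Measure.map (fun x : ℝ => -x) (volume.restrict (Ici (-a))) := by
    rw [hpre, ← Measure.restrict_map measurable_neg measurableSet_Iic,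
      Measure.map_neg_eq_self]
  rw [IntegrableOn, hmap, A.integrable_map_iff]
  exact h3

lemma integral_exp_Iic' (η u a : ℝ) (hη : 0 < η) :
    ∫ y in Iic a, Real.exp ((y - u) / η) = η * Real.exp ((a - u) / η) := by
  have hderiv : ∀ x ∈ Iic a,
      HasDerivAt (fun y => η * Real.exp ((y - u) / η)) (Real.exp ((x - u) / η)) x := by
    intro x _
    have h : HasDerivAt (fun y : ℝ => (y - u) / η) (1 / η) x := by
      simpa using ((hasDerivAt_id x).sub_const u).div_const η
    have h2 := (Real.hasDerivAt_exp ((x - u) / η)).comp x h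
    have h3 := h2.const_mul η
    exact h3.congr_deriv (by field_simp)
  have htends : Tendsto (fun y => η * Real.exp ((y - u) / η)) atBot (nhds 0) := by
    have h0 : Tendsto (fun y : ℝ => (y - u) / η) atBot atBot := by
      apply Tendsto.atBot_div_const hη
      simpa [sub_eq_add_neg] using tendsto_atBot_add_const_right atBot (-u) tendsto_id
    simpa [Function.comp] using (Real.tendsto_exp_atBot.comp h0).const_mul η
  rw [integral_Iic_of_hasDerivAt_of_tendsto' hderiv (integrableOn_exp_Iic η u a hη) htends]
  ring

lemma integral_exp_Ioi' (η u a : ℝ) (hη : 0 < η) :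
    ∫ y in Ioi a, Real.exp (-(y - u) / η) = η * Real.exp (-(a - u) / η) := by
  have h := integral_comp_neg_Iic (-a) (fun y : ℝ => Real.exp (-(y - u) / η))
  rw [neg_neg] at h
  rw [← h]
  have heq : ∀ x ∈ Iic (-a),
      (fun x : ℝ => Real.exp (-(-x - u) / η)) x = Real.exp ((x - (-u)) / η) := by
    intro x _
    exact Real.exp_eq_exp.mpr (by ring)
  rw [setIntegral_congr_fun measurableSet_Iic heq, integral_exp_Iic' η (-u) (-a) hη,
    show (-a - -u) = -(a - u) by ring]

lemma integrableOn_exp_Ioi (η u a : ℝ) (hη : 0 < η) :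
    IntegrableOn (fun y : ℝ => Real.exp (-(y - u) / η)) (Ioi a) := by
  have h1 : IntegrableOn (fun x : ℝ => Real.exp (-(1/η) * x) * Real.exp (u/η)) (Ioi a) :=
    (exp_neg_integrableOn_Ioi a (by positivity)).mul_const _
  refine h1.congr_fun (fun x _ => ?_) measurableSet_Ioi
  beta_reduce
  rw [← Real.exp_add]
  exact Real.exp_eq_exp.mpr (by field_simp; ring)

lemma lap_eqOn_Iic {η u a : ℝ} (h : a ≤ u) :
    EqOn (fun y => Real.exp ((y - u) / η) / (2 * η)) (lap η u) (Iic a) := by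
  intro y hy
  simp only [lap]
  rw [abs_of_nonneg (by linarith [hy.out] : (0:ℝ) ≤ u - y),
    show -(u - y) / η = (y - u) / η by ring]

lemma lap_eqOn_Ioi {η u a : ℝ} (h : u ≤ a) :
    EqOn (fun y => Real.exp (-(y - u) / η) / (2 * η)) (lap η u) (Ioi a) := by
  intro y hy
  simp only [lap]
  rw [abs_of_nonpos (by linarith [hy.out] : u - y ≤ 0),
    show -(-(u - y)) / η = -(y - u) / η by ring]

lemma integrableOn_lap_Iic {η u a : ℝ} (hη : 0 < η) (h : a ≤ u) :
    IntegrableOn (lap η u) (Iic a) :=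
  IntegrableOn.congr_fun ((integrableOn_exp_Iic η u a hη).div_const (2 * η))
    (lap_eqOn_Iic h) measurableSet_Iic

lemma integrableOn_lap_Ioi {η u a : ℝ} (hη : 0 < η) (h : u ≤ a) :
    IntegrableOn (lap η u) (Ioi a) :=
  IntegrableOn.congr_fun ((integrableOn_exp_Ioi η u a hη).div_const (2 * η))
    (lap_eqOn_Ioi h) measurableSet_Ioi

lemma setIntegral_lap_Iic_left {η u a : ℝ} (hη : 0 < η) (h : a ≤ u) :
    ∫ y in Iic a, lap η u y = Real.exp ((a - u) / η) / 2 := by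
  rw [← setIntegral_congr_fun measurableSet_Iic (lap_eqOn_Iic h)]
  simp only [integral_div]
  rw [integral_exp_Iic' η u a hη]
  field_simp

lemma setIntegral_lap_Ioi {η u a : ℝ} (hη : 0 < η) (h : u ≤ a) :
    ∫ y in Ioi a, lap η u y = Real.exp (-(a - u) / η) / 2 := by
  rw [← setIntegral_congr_fun measurableSet_Ioi (lap_eqOn_Ioi h)]
  simp only [integral_div]
  rw [integral_exp_Ioi' η u a hη]
  field_simp

lemma integrable_lap {η : ℝ} (hη : 0 < η) (u : ℝ) : Integrable (lap η u) := by
  rw [← integrableOn_univ, ← Set.Iic_union_Ioi (a := u)]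
  exact (integrableOn_lap_Iic hη le_rfl).union (integrableOn_lap_Ioi hη le_rfl)

lemma integral_lap {η : ℝ} (hη : 0 < η) (u : ℝ) : ∫ y, lap η u y = 1 := by
  have h := integral_add_compl (measurableSet_Iic (a := u)) (integrable_lap hη u)
  rw [compl_Iic] at h
  rw [← h, setIntegral_lap_Iic_left hη le_rfl, setIntegral_lap_Ioi hη le_rfl]
  norm_num

lemma setIntegral_lap_Iic_right {η u a : ℝ} (hη : 0 < η) (h : u ≤ a) :
    ∫ y in Iic a, lap η u y = 1 - Real.exp (-(a - u) / η) / 2 := by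
  have h1 := integral_add_compl (measurableSet_Iic (a := a)) (integrable_lap hη u)
  rw [compl_Iic, integral_lap hη u, setIntegral_lap_Ioi hη h] at h1
  linarith

lemma setIntegral_lap_Ioi_right {η u a : ℝ} (hη : 0 < η) (h : a ≤ u) :
    ∫ y in Ioi a, lap η u y = 1 - Real.exp ((a - u) / η) / 2 := by
  have h1 := integral_add_compl (measurableSet_Iic (a := a)) (integrable_lap hη u)
  rw [compl_Iic, integral_lap hη u, setIntegral_lap_Iic_left hη h] at h1
  linarith

lemma abs_mono₁ {u₁ u₂ y : ℝ} (h : u₁ ≤ u₂) (hy : y ≤ (u₁ + u₂) / 2) :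
    |u₁ - y| ≤ |u₂ - y| := by
  have h1 : (u₁ - y) ^ 2 ≤ (u₂ - y) ^ 2 := by nlinarith
  nlinarith [sq_abs (u₁ - y), sq_abs (u₂ - y), abs_nonneg (u₁ - y), abs_nonneg (u₂ - y)]

lemma abs_mono₂ {u₁ u₂ y : ℝ} (h : u₁ ≤ u₂) (hy : (u₁ + u₂) / 2 ≤ y) :
    |u₂ - y| ≤ |u₁ - y| := by
  have h1 : (u₂ - y) ^ 2 ≤ (u₁ - y) ^ 2 := by nlinarith
  nlinarith [sq_abs (u₁ - y), sq_abs (u₂ - y), abs_nonneg (u₁ - y), abs_nonneg (u₂ - y)]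

lemma lap_mono₁ {η u₁ u₂ y : ℝ} (hη : 0 < η) (h : u₁ ≤ u₂) (hy : y ≤ (u₁ + u₂) / 2) :
    lap η u₂ y ≤ lap η u₁ y := by
  unfold lap
  have h2 : -|u₂ - y| / η ≤ -|u₁ - y| / η :=
    div_le_div_of_nonneg_right (by linarith [abs_mono₁ h hy]) hη.le
  exact div_le_div_of_nonneg_right (Real.exp_le_exp.mpr h2) (by positivity)

lemma lap_mono₂ {η u₁ u₂ y : ℝ} (hη : 0 < η) (h : u₁ ≤ u₂) (hy : (u₁ + u₂) / 2 ≤ y) :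
    lap η u₁ y ≤ lap η u₂ y := by
  unfold lap
  have h2 : -|u₁ - y| / η ≤ -|u₂ - y| / η :=
    div_le_div_of_nonneg_right (by linarith [abs_mono₂ h hy]) hη.le
  exact div_le_div_of_nonneg_right (Real.exp_le_exp.mpr h2) (by positivity)

theorem laplace_tv_aux (η : ℝ) (hη : 0 < η)
    (Q : ℝ → Measure ℝ)
    (hQ : ∀ u : ℝ, Q u = volume.withDensity
      (fun y => ENNReal.ofReal (Real.exp (-|u - y| / η) / (2 * η))))
    (u₁ u₂ : ℝ) (h12 : u₁ ≤ u₂) :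
    (⨆ (S : Set ℝ) (_ : MeasurableSet S), |(Q u₁ S).toReal - (Q u₂ S).toReal|)
      = 1 - Real.exp (-|u₁ - u₂| / (2 * η)) := by
  set m : ℝ := (u₁ + u₂) / 2 with hm
  set E : ℝ := Real.exp (-|u₁ - u₂| / (2 * η)) with hE
  have habs : |u₁ - u₂| = u₂ - u₁ := by
    rw [abs_sub_comm]; exact abs_of_nonneg (by linarith)
  have hm1 : u₁ ≤ m := by rw [hm]; linarith
  have hm2 : m ≤ u₂ := by rw [hm]; linarith
  have hE0 : 0 ≤ 1 - E := by
    have : E ≤ 1 := by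
      rw [hE]
      apply Real.exp_le_one_iff.mpr
      apply div_nonpos_of_nonpos_of_nonneg (neg_nonpos_of_nonneg (abs_nonneg _))
      positivity
    linarith
  -- toReal of Q as a set integral
  have hQR : ∀ u : ℝ, ∀ S : Set ℝ, MeasurableSet S →
      (Q u S).toReal = ∫ y in S, lap η u y := by
    intro u S hS
    rw [hQ u, withDensity_apply _ hS,
      integral_eq_lintegral_of_nonneg_ae (ae_of_all _ fun y => lap_nonneg η u y hη)
        ((lap_continuous η u).aestronglyMeasurable.restrict)]
    rfl
  -- key integral values
  have harg1 : -(m - u₁) / η = -|u₁ - u₂| / (2 * η) := by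
    rw [habs, hm]; field_simp; ring
  have harg2 : (m - u₂) / η = -|u₁ - u₂| / (2 * η) := by
    rw [habs, hm]; field_simp; ring
  have hA : ∫ y in Iic m, lap η u₁ y = 1 - E / 2 := by
    rw [setIntegral_lap_Iic_right hη hm1, harg1, hE]
  have hB : ∫ y in Iic m, lap η u₂ y = E / 2 := by
    rw [setIntegral_lap_Iic_left hη hm2, harg2, hE]
  have hA' : ∫ y in Ioi m, lap η u₁ y = E / 2 := by
    rw [setIntegral_lap_Ioi hη hm1, harg1, hE]
  have hB' : ∫ y in Ioi m, lap η u₂ y = 1 - E / 2 := by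
    rw [setIntegral_lap_Ioi_right hη hm2, harg2, hE]
  have hi₁ : Integrable (lap η u₁) := integrable_lap hη u₁
  have hi₂ : Integrable (lap η u₂) := integrable_lap hη u₂
  -- the key upper bound for measurable sets
  have key : ∀ S : Set ℝ, MeasurableSet S →
      |(∫ y in S, lap η u₁ y) - ∫ y in S, lap η u₂ y| ≤ 1 - E := by
    intro S hS
    rw [abs_sub_le_iff]
    constructor
    · rw [← integral_sub hi₁.integrableOn hi₂.integrableOn]
      have hsub : IntegrableOn (fun y => lap η u₁ y - lap η u₂ y) S :=
        hi₁.integrableOn.sub hi₂.integrableOn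
      have split := integral_inter_add_diff (s := S) (measurableSet_Iic (a := m)) hsub
      have h1 : ∫ y in S \ Iic m, (lap η u₁ y - lap η u₂ y) ≤ 0 := by
        apply setIntegral_nonpos (hS.diff measurableSet_Iic)
        intro y hy
        have : m ≤ y := le_of_not_ge hy.2
        linarith [lap_mono₂ hη h12 this]
      have h2 : ∫ y in S ∩ Iic m, (lap η u₁ y - lap η u₂ y)
          ≤ ∫ y in Iic m, (lap η u₁ y - lap η u₂ y) := by
        apply setIntegral_mono_set (hi₁.integrableOn.sub hi₂.integrableOn)
        · filter_upwards [ae_restrict_mem measurableSet_Iic] with y hy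
          have hym : y ≤ m := hy
          show (0:ℝ) ≤ lap η u₁ y - lap η u₂ y
          linarith [lap_mono₁ hη h12 hym]
        · exact HasSubset.Subset.eventuallyLE inter_subset_right
      have h3 : ∫ y in Iic m, (lap η u₁ y - lap η u₂ y) = 1 - E := by
        rw [integral_sub hi₁.integrableOn hi₂.integrableOn, hA, hB]
        ring
      linarith
    · rw [← integral_sub hi₂.integrableOn hi₁.integrableOn]
      have hsub : IntegrableOn (fun y => lap η u₂ y - lap η u₁ y) S :=
        hi₂.integrableOn.sub hi₁.integrableOn
      have split := integral_inter_add_diff (s := S) (measurableSet_Ioi (a := m)) hsub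
      have h1 : ∫ y in S \ Ioi m, (lap η u₂ y - lap η u₁ y) ≤ 0 := by
        apply setIntegral_nonpos (hS.diff measurableSet_Ioi)
        intro y hy
        have : y ≤ m := le_of_not_gt hy.2
        linarith [lap_mono₁ hη h12 this]
      have h2 : ∫ y in S ∩ Ioi m, (lap η u₂ y - lap η u₁ y)
          ≤ ∫ y in Ioi m, (lap η u₂ y - lap η u₁ y) := by
        apply setIntegral_mono_set (hi₂.integrableOn.sub hi₁.integrableOn)
        · filter_upwards [ae_restrict_mem measurableSet_Ioi] with y hy
          have hym : m ≤ y := le_of_lt hy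
          show (0:ℝ) ≤ lap η u₂ y - lap η u₁ y
          linarith [lap_mono₂ hη h12 hym]
        · exact HasSubset.Subset.eventuallyLE inter_subset_right
      have h3 : ∫ y in Ioi m, (lap η u₂ y - lap η u₁ y) = 1 - E := by
        rw [integral_sub hi₂.integrableOn hi₁.integrableOn, hA', hB']
        ring
      linarith
  have hub : ∀ S : Set ℝ,
      (⨆ _ : MeasurableSet S, |(Q u₁ S).toReal - (Q u₂ S).toReal|) ≤ 1 - E := by
    intro S
    refine Real.iSup_le (fun hS => ?_) hE0
    rw [hQR u₁ S hS, hQR u₂ S hS]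
    exact key S hS
  apply le_antisymm
  · exact Real.iSup_le hub hE0
  · have hmem : |(Q u₁ (Iic m)).toReal - (Q u₂ (Iic m)).toReal| = 1 - E := by
      rw [hQR u₁ (Iic m) measurableSet_Iic, hQR u₂ (Iic m) measurableSet_Iic, hA, hB]
      rw [show (1 - E / 2) - E / 2 = 1 - E by ring]
      exact abs_of_nonneg hE0
    have hbdd : BddAbove (Set.range fun S : Set ℝ =>
        ⨆ _ : MeasurableSet S, |(Q u₁ S).toReal - (Q u₂ S).toReal|) := by
      refine ⟨1 - E, ?_⟩
      rintro x ⟨S, rfl⟩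
      exact hub S
    have step1 : (1 : ℝ) - E
        = ⨆ _ : MeasurableSet (Iic m), |(Q u₁ (Iic m)).toReal - (Q u₂ (Iic m)).toReal| := by
      haveI : Nonempty (MeasurableSet (Iic m)) := ⟨measurableSet_Iic⟩
      rw [ciSup_const, hmem]
    rw [step1]
    exact le_ciSup hbdd (Iic m)

end LapTVAux

/-- The total variation distance between two one-dimensional Laplace
distributions with scale `η` centered at `u₁` and `u₂` equals
`1 - exp (-|u₁ - u₂| / (2 η))`. -/
theorem laplace_total_variation (η : ℝ) (hη : 0 < η)
    (Q : ℝ → Measure ℝ)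
    (hQ : ∀ u : ℝ, Q u = volume.withDensity
      (fun y => ENNReal.ofReal (Real.exp (-|u - y| / η) / (2 * η))))
    (u₁ u₂ : ℝ) :
    (⨆ (S : Set ℝ) (_ : MeasurableSet S), |(Q u₁ S).toReal - (Q u₂ S).toReal|)
      = 1 - Real.exp (-|u₁ - u₂| / (2 * η)) := by
  rcases le_total u₁ u₂ with h | h
  · exact LapTVAux.laplace_tv_aux η hη Q hQ u₁ u₂ h
  · have hswap : (⨆ (S : Set ℝ) (_ : MeasurableSet S),
        |(Q u₁ S).toReal - (Q u₂ S).toReal|)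
        = ⨆ (S : Set ℝ) (_ : MeasurableSet S),
        |(Q u₂ S).toReal - (Q u₁ S).toReal| := by
      apply iSup_congr
      intro S
      apply iSup_congr
      intro _
      exact abs_sub_comm _ _
    rw [hswap, abs_sub_comm u₁ u₂]
    exact LapTVAux.laplace_tv_aux η hη Q hQ u₂ u₁ h
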